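/- Let S and T be nonempty well-founded trees on ℕ. If rank(S) ≤ rank(T), then the Kleene–Brouwer order of S order-embeds into the Kleene–Brouwer order of T^∞. If moreover rank(S) < rank(T), then the order type (Ordinal.type) of the Kleene–Brouwer order of S is strictly less than the order type of the Kleene–Brouwer order of T^∞. -/

import Mathlib

/-- A tree: a set of finite lists containing the empty list and closed under prefixes. -/
def IsTree {α : Type*} (T : Set (List α)) : Prop :=
  [] ∈ T ∧ ∀ ⦃σ τ : List α⦄, σ <+: τ → τ ∈ T → σ ∈ T

/-- `T` has an infinite path: an infinite sequence all of whose finite initial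
segments belong to `T`. -/
def HasInfPath {α : Type*} (T : Set (List α)) : Prop :=
  ∃ f : ℕ → α, ∀ k : ℕ, (List.range k).map f ∈ T

/-- The relation "τ properly extends σ" on a tree `T`. -/
def extRel {α : Type*} (T : Set (List α)) : T → T → Prop :=
  fun τ σ => σ.val <+: τ.val ∧ σ.val ≠ τ.val

/-- The rank of a node of a well-founded tree with respect to proper extension. -/
noncomputable def treeRank {α : Type*} (T : Set (List α))
    (hwf : WellFounded (extRel T)) (σ : T) : Ordinal :=
  @IsWellFounded.rank _ (extRel T) ⟨hwf⟩ σ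

/-- The Kleene–Brouwer order induced by a relation `r` on the alphabet. -/
def KBLt {α : Type*} (r : α → α → Prop) (σ τ : List α) : Prop :=
  (τ <+: σ ∧ σ ≠ τ) ∨
    ∃ (i : ℕ) (h1 : i < σ.length) (h2 : i < τ.length),
      σ.take i = τ.take i ∧ r (σ.get ⟨i, h1⟩) (τ.get ⟨i, h2⟩)

/-- The linear order of type ω on `List ℕ × ℕ`, transported from `ℕ` along the canonical
denumerable encoding. -/
def encLt (a b : List ℕ × ℕ) : Prop :=
  Encodable.encode a < Encodable.encode b

/-- The tree `T^∞` over the alphabet `List ℕ × ℕ`. -/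
def inftyTree (T : Set (List ℕ)) : Set (List (List ℕ × ℕ)) :=
  {l | (∀ p ∈ l, p.1 ∈ T ∧ p.1 ≠ []) ∧
       l.Chain' (fun p q => p.1 <+: q.1 ∧ p.1 ≠ q.1)}

open Classical in
/-- rank as a total function on lists -/
noncomputable def rk (T : Set (List ℕ)) (hwf : WellFounded (extRel T)) (τ : List ℕ) : Ordinal :=
  if h : τ ∈ T then treeRank T hwf ⟨τ, h⟩ else 0

lemma rk_eq_treeRank {T : Set (List ℕ)} (hwf : WellFounded (extRel T)) {τ : List ℕ} (h : τ ∈ T) :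
    rk T hwf τ = treeRank T hwf ⟨τ, h⟩ := dif_pos h

lemma rk_lt {T : Set (List ℕ)} (hwf : WellFounded (extRel T)) {τ τ' : List ℕ}
    (hτ : τ ∈ T) (hτ' : τ' ∈ T) (hp : τ <+: τ') (hne : τ ≠ τ') :
    rk T hwf τ' < rk T hwf τ := by
  haveI : IsWellFounded _ (extRel T) := ⟨hwf⟩
  rw [rk_eq_treeRank hwf hτ, rk_eq_treeRank hwf hτ']
  exact IsWellFounded.rank_lt_of_rel (r := extRel T) (a := ⟨τ', hτ'⟩) (b := ⟨τ, hτ⟩) ⟨hp, hne⟩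

lemma rk_step {T : Set (List ℕ)} (hwf : WellFounded (extRel T)) {τ : List ℕ}
    (hτ : τ ∈ T) {β : Ordinal} (hβ : β < rk T hwf τ) :
    ∃ τ', τ' ∈ T ∧ (τ <+: τ' ∧ τ ≠ τ') ∧ β ≤ rk T hwf τ' := by
  haveI : IsWellFounded _ (extRel T) := ⟨hwf⟩
  rw [rk_eq_treeRank hwf hτ] at hβ
  have : treeRank T hwf ⟨τ, hτ⟩ = IsWellFounded.rank (extRel T) ⟨τ, hτ⟩ := rfl
  rw [this, IsWellFounded.rank_eq, Ordinal.lt_iSup_iff] at hβ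
  obtain ⟨⟨⟨τ', hτ'⟩, hrel⟩, hb⟩ := hβ
  rw [Order.lt_succ_iff] at hb
  exact ⟨τ', hτ', ⟨hrel.1, hrel.2⟩, by rw [rk_eq_treeRank hwf hτ']; exact hb⟩
open Classical in
noncomputable def pickExt (T : Set (List ℕ)) (hwf : WellFounded (extRel T))
    (τ : List ℕ) (β : Ordinal) : List ℕ :=
  if h : ∃ τ', τ' ∈ T ∧ (τ <+: τ' ∧ τ ≠ τ') ∧ β ≤ rk T hwf τ' then h.choose else []

lemma pickExt_spec {T : Set (List ℕ)} {hwf : WellFounded (extRel T)} {τ : List ℕ} {β : Ordinal}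
    (h : ∃ τ', τ' ∈ T ∧ (τ <+: τ' ∧ τ ≠ τ') ∧ β ≤ rk T hwf τ') :
    pickExt T hwf τ β ∈ T ∧ (τ <+: pickExt T hwf τ β ∧ τ ≠ pickExt T hwf τ β) ∧
      β ≤ rk T hwf (pickExt T hwf τ β) := by
  rw [pickExt, dif_pos h]
  exact h.choose_spec

variable (S T : Set (List ℕ)) (hSwf : WellFounded (extRel S)) (hTwf : WellFounded (extRel T))

noncomputable def gfun (ρ : List ℕ) (σ : List ℕ) : List ℕ :=
  if h : σ = [] then ρ else pickExt T hTwf (gfun ρ σ.dropLast) (rk S hSwf σ)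
termination_by σ.length
decreasing_by
  simp only [List.length_dropLast]
  have : 0 < σ.length := List.length_pos_iff.mpr h
  omega

lemma gfun_nil (ρ : List ℕ) : gfun S T hSwf hTwf ρ [] = ρ := by rw [gfun]; rfl

lemma gfun_cons {ρ σ : List ℕ} (h : σ ≠ []) :
    gfun S T hSwf hTwf ρ σ = pickExt T hTwf (gfun S T hSwf hTwf ρ σ.dropLast) (rk S hSwf σ) := by
  rw [gfun, dif_neg h]

variable {S T hSwf hTwf}

lemma gfun_spec (hS : IsTree S) (hT : IsTree T) {ρ : List ℕ} (hρ : ρ ∈ T)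
    (hr : rk S hSwf [] ≤ rk T hTwf ρ) :
    ∀ σ, σ ∈ S → gfun S T hSwf hTwf ρ σ ∈ T ∧
      rk S hSwf σ ≤ rk T hTwf (gfun S T hSwf hTwf ρ σ) ∧
      (σ ≠ [] → gfun S T hSwf hTwf ρ σ.dropLast <+: gfun S T hSwf hTwf ρ σ ∧
        gfun S T hSwf hTwf ρ σ.dropLast ≠ gfun S T hSwf hTwf ρ σ) := by
  have key : ∀ n σ, σ.length ≤ n → σ ∈ S → gfun S T hSwf hTwf ρ σ ∈ T ∧
      rk S hSwf σ ≤ rk T hTwf (gfun S T hSwf hTwf ρ σ) ∧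
      (σ ≠ [] → gfun S T hSwf hTwf ρ σ.dropLast <+: gfun S T hSwf hTwf ρ σ ∧
        gfun S T hSwf hTwf ρ σ.dropLast ≠ gfun S T hSwf hTwf ρ σ) := by
    intro n
    induction n with
    | zero =>
      intro σ hlen _
      have hσ : σ = [] := List.length_eq_zero_iff.mp (Nat.le_zero.mp hlen)
      subst hσ
      rw [gfun_nil]
      exact ⟨hρ, hr, fun h => absurd rfl h⟩
    | succ n ih =>
      intro σ hlen hσS
      by_cases h : σ = []
      · subst h
        rw [gfun_nil]
        exact ⟨hρ, hr, fun h => absurd rfl h⟩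
      · have hpS : σ.dropLast ∈ S := hS.2 (List.dropLast_prefix σ) hσS
        have hplen : σ.dropLast.length < σ.length := by
          simp only [List.length_dropLast]
          have : 0 < σ.length := List.length_pos_iff.mpr h
          omega
        have IH := ih σ.dropLast (by omega) hpS
        have hne : σ.dropLast ≠ σ := fun e => by rw [e] at hplen; omega
        have hlt : rk S hSwf σ < rk S hSwf σ.dropLast :=
          rk_lt hSwf hpS hσS (List.dropLast_prefix σ) hne
        have hex := rk_step hTwf IH.1 (hlt.trans_le IH.2.1)
        have spec := pickExt_spec hex
        rw [gfun_cons S T hSwf hTwf h]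
        exact ⟨spec.1, spec.2.2, fun _ => spec.2.1⟩
  exact fun σ => key σ.length σ le_rfl

/-- monotonicity of gfun along the tree -/
lemma gfun_mono (hS : IsTree S) (hT : IsTree T) {ρ : List ℕ} (hρ : ρ ∈ T)
    (hr : rk S hSwf [] ≤ rk T hTwf ρ) :
    ∀ τ, τ ∈ S → ∀ σ, σ <+: τ → σ ≠ τ →
      gfun S T hSwf hTwf ρ σ <+: gfun S T hSwf hTwf ρ τ ∧
      (gfun S T hSwf hTwf ρ σ).length < (gfun S T hSwf hTwf ρ τ).length := by
  have key : ∀ n τ, τ.length ≤ n → τ ∈ S → ∀ σ, σ <+: τ → σ ≠ τ →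
      gfun S T hSwf hTwf ρ σ <+: gfun S T hSwf hTwf ρ τ ∧
      (gfun S T hSwf hTwf ρ σ).length < (gfun S T hSwf hTwf ρ τ).length := by
    intro n
    induction n with
    | zero =>
      intro τ hlen _ σ hp hne
      have : τ = [] := List.length_eq_zero_iff.mp (Nat.le_zero.mp hlen)
      subst this
      exact absurd (List.prefix_nil.mp hp) hne
    | succ n ih =>
      intro τ hlen hτS σ hp hne
      have hτne : τ ≠ [] := fun e => by subst e; exact hne (List.prefix_nil.mp hp)
      have hplen : τ.dropLast.length < τ.length := by
        simp only [List.length_dropLast]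
        have : 0 < τ.length := List.length_pos_iff.mpr hτne
        omega
      have hσlt : σ.length < τ.length := by
        rcases Nat.lt_or_ge σ.length τ.length with h | h
        · exact h
        · exact absurd (List.IsPrefix.eq_of_length hp
            (le_antisymm hp.length_le h)) hne
      have hstep := (gfun_spec hS hT hρ hr τ hτS).2.2 hτne
      have hsteplen : (gfun S T hSwf hTwf ρ τ.dropLast).length <
          (gfun S T hSwf hTwf ρ τ).length := by
        rcases Nat.lt_or_ge (gfun S T hSwf hTwf ρ τ.dropLast).length
            (gfun S T hSwf hTwf ρ τ).length with h | h
        · exact h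
        · exact absurd (List.IsPrefix.eq_of_length hstep.1
            (le_antisymm hstep.1.length_le h)) hstep.2
      by_cases hc : σ = τ.dropLast
      · subst hc; exact ⟨hstep.1, hsteplen⟩
      · have hpdl : σ <+: τ.dropLast := by
          rw [List.dropLast_eq_take, List.prefix_take_iff]
          exact ⟨hp, by omega⟩
        have hpdS : τ.dropLast ∈ S := hS.2 (List.dropLast_prefix τ) hτS
        have IH := ih τ.dropLast (by omega) hpdS σ hpdl hc
        exact ⟨IH.1.trans hstep.1, IH.2.trans hsteplen⟩
  exact fun τ hτ => key τ.length τ le_rfl hτ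

lemma exists_gt_encode (l : List ℕ) (B : ℕ) : ∃ m : ℕ, B < Encodable.encode (l, m) := by
  by_contra hc
  push_neg at hc
  have hinj : Function.Injective (fun m : ℕ => (⟨Encodable.encode (l, m),
      Nat.lt_succ_of_le (hc m)⟩ : Fin (B+1))) := by
    intro a b hab
    have : Encodable.encode (l, a) = Encodable.encode (l, b) := congrArg Fin.val hab
    simpa using Encodable.encode_injective this
  haveI : Finite ℕ := Finite.of_injective _ hinj
  exact not_finite ℕ

noncomputable def Efun (S T : Set (List ℕ)) (hSwf : WellFounded (extRel S))
    (hTwf : WellFounded (extRel T)) (ρ p : List ℕ) (n : ℕ) : ℕ :=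
  sInf {v | (∃ m : ℕ, v = Encodable.encode (gfun S T hSwf hTwf ρ (p ++ [n]), m)) ∧
    ∀ n' < n, Efun S T hSwf hTwf ρ p n' < v}
termination_by n

lemma Efun_spec (S T : Set (List ℕ)) (hSwf : WellFounded (extRel S))
    (hTwf : WellFounded (extRel T)) (ρ p : List ℕ) (n : ℕ) :
    (∃ m : ℕ, Efun S T hSwf hTwf ρ p n =
      Encodable.encode (gfun S T hSwf hTwf ρ (p ++ [n]), m)) ∧
    ∀ n' < n, Efun S T hSwf hTwf ρ p n' < Efun S T hSwf hTwf ρ p n := by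
  have hne : {v | (∃ m : ℕ, v = Encodable.encode (gfun S T hSwf hTwf ρ (p ++ [n]), m)) ∧
      ∀ n' < n, Efun S T hSwf hTwf ρ p n' < v}.Nonempty := by
    obtain ⟨m, hm⟩ := exists_gt_encode (gfun S T hSwf hTwf ρ (p ++ [n]))
      ((Finset.range n).sup (Efun S T hSwf hTwf ρ p))
    refine ⟨Encodable.encode (gfun S T hSwf hTwf ρ (p ++ [n]), m), ⟨m, rfl⟩, ?_⟩
    intro n' hn'
    exact lt_of_le_of_lt (Finset.le_sup (Finset.mem_range.mpr hn')) hm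
  have := Nat.sInf_mem hne
  rw [← Efun] at this
  exact this

noncomputable def pairf (S T : Set (List ℕ)) (hSwf : WellFounded (extRel S))
    (hTwf : WellFounded (extRel T)) (ρ σ : List ℕ) : List ℕ × ℕ :=
  Denumerable.ofNat (List ℕ × ℕ) (Efun S T hSwf hTwf ρ σ.dropLast (σ.getLast?.getD 0))

lemma encode_pairf (S T : Set (List ℕ)) (hSwf : WellFounded (extRel S))
    (hTwf : WellFounded (extRel T)) (ρ p : List ℕ) (n : ℕ) :
    Encodable.encode (pairf S T hSwf hTwf ρ (p ++ [n])) = Efun S T hSwf hTwf ρ p n := by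
  rw [pairf, Denumerable.encode_ofNat, List.dropLast_concat, List.getLast?_concat]
  rfl

lemma pairf_fst (S T : Set (List ℕ)) (hSwf : WellFounded (extRel S))
    (hTwf : WellFounded (extRel T)) (ρ p : List ℕ) (n : ℕ) :
    (pairf S T hSwf hTwf ρ (p ++ [n])).1 = gfun S T hSwf hTwf ρ (p ++ [n]) := by
  obtain ⟨m, hm⟩ := (Efun_spec S T hSwf hTwf ρ p n).1
  rw [pairf, List.dropLast_concat, List.getLast?_concat]
  show (Denumerable.ofNat (List ℕ × ℕ) (Efun S T hSwf hTwf ρ p n)).1 = _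
  rw [hm, Denumerable.ofNat_encode]

lemma pairf_fst' (S T : Set (List ℕ)) (hSwf : WellFounded (extRel S))
    (hTwf : WellFounded (extRel T)) (ρ : List ℕ) {σ : List ℕ} (h : σ ≠ []) :
    (pairf S T hSwf hTwf ρ σ).1 = gfun S T hSwf hTwf ρ σ := by
  have := List.dropLast_append_getLast h
  rw [← this]
  exact pairf_fst S T hSwf hTwf ρ σ.dropLast (σ.getLast h)

noncomputable def Ffun (S T : Set (List ℕ)) (hSwf : WellFounded (extRel S))
    (hTwf : WellFounded (extRel T)) (ρ σ : List ℕ) : List (List ℕ × ℕ) :=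
  (List.range σ.length).map (fun i => pairf S T hSwf hTwf ρ (σ.take (i+1)))

lemma Ffun_length (S T : Set (List ℕ)) (hSwf : WellFounded (extRel S))
    (hTwf : WellFounded (extRel T)) (ρ σ : List ℕ) :
    (Ffun S T hSwf hTwf ρ σ).length = σ.length := by
  simp [Ffun]

lemma Ffun_getElem (S T : Set (List ℕ)) (hSwf : WellFounded (extRel S))
    (hTwf : WellFounded (extRel T)) (ρ σ : List ℕ) (i : ℕ) (hi : i < σ.length) :
    (Ffun S T hSwf hTwf ρ σ)[i]'(by rw [Ffun_length]; exact hi) =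
      pairf S T hSwf hTwf ρ (σ.take (i+1)) := by
  simp [Ffun]

lemma Ffun_take (S T : Set (List ℕ)) (hSwf : WellFounded (extRel S))
    (hTwf : WellFounded (extRel T)) (ρ σ : List ℕ) (k : ℕ) (hk : k ≤ σ.length) :
    (Ffun S T hSwf hTwf ρ σ).take k = Ffun S T hSwf hTwf ρ (σ.take k) := by
  rw [Ffun, Ffun, ← List.map_take, List.take_range]
  simp only [List.length_take, min_eq_left hk]
  apply List.map_congr_left
  intro i hi
  rw [List.mem_range] at hi
  rw [List.take_take, min_eq_left (by omega)]

section KBlemmas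

variable {α : Type*} {r : α → α → Prop}

lemma exists_first_diff {l l' : List α} (h1 : ¬ l' <+: l) (h2 : ¬ l <+: l') :
    ∃ i, ∃ hi : i < l.length, ∃ hi' : i < l'.length,
      l.take i = l'.take i ∧ l[i]'hi ≠ l'[i]'hi' := by
  classical
  have hne : l ≠ l' := fun e => h2 (e ▸ List.prefix_refl l)
  have hex : ∃ k, l.take k ≠ l'.take k := ⟨max l.length l'.length, by
    intro e
    rw [List.take_of_length_le (le_max_left _ _), List.take_of_length_le (le_max_right _ _)] at e
    exact hne e⟩
  have h0 : Nat.find hex ≠ 0 := by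
    intro e
    have := Nat.find_spec hex
    rw [e] at this
    simp at this
  set j := Nat.find hex - 1 with hj
  have hjlt : j < Nat.find hex := by omega
  have heq : l.take j = l'.take j := not_not.mp (Nat.find_min hex hjlt)
  have hdiff : l.take (j+1) ≠ l'.take (j+1) := by
    have e : j + 1 = Nat.find hex := by omega
    rw [e]
    exact Nat.find_spec hex
  have hjl : j < l.length := by
    by_contra hc
    push_neg at hc
    apply h2
    have e2 : l.take j = l := List.take_of_length_le hc
    rw [e2] at heq
    rw [heq]
    exact List.take_prefix _ _
  have hjl' : j < l'.length := by
    by_contra hc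
    push_neg at hc
    apply h1
    have e2 : l'.take j = l' := List.take_of_length_le hc
    rw [e2] at heq
    rw [← heq]
    exact List.take_prefix _ _
  refine ⟨j, hjl, hjl', heq, ?_⟩
  intro e
  apply hdiff
  rw [← List.take_concat_get hjl, ← List.take_concat_get hjl', heq, e]

lemma kb_irrefl (hr : ∀ a, ¬ r a a) (l : List α) : ¬ KBLt r l l := by
  rintro (⟨_, hne⟩ | ⟨i, h1, h2, _, hrr⟩)
  · exact hne rfl
  · exact hr _ hrr

lemma prefix_getElem {l l' : List α} (h : l <+: l') {i : ℕ} (hi : i < l.length) :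
    l'[i]'(hi.trans_le h.length_le) = l[i]'hi := (List.IsPrefix.getElem h hi).symm

lemma take_eq_getElem {l l' : List α} {j : ℕ} (h : l.take j = l'.take j) {i : ℕ} (hij : i < j)
    (hi : i < l.length) (hi' : i < l'.length) : l[i]'hi = l'[i]'hi' := by
  have e1 : (l.take j)[i]'(by simp; omega) = l[i]'hi := List.getElem_take
  have e2 : (l'.take j)[i]'(by simp; omega) = l'[i]'hi' := List.getElem_take
  have e3 := List.getElem_of_eq h (i := i) (by simp; omega)
  rw [← e1, ← e2]
  exact e3

lemma kb_asymm (hr : ∀ a b, r a b → ¬ r b a) {l l' : List α} :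
    KBLt r l l' → ¬ KBLt r l' l := by
  have hirr : ∀ a, ¬ r a a := fun a ha => hr a a ha ha
  rintro (⟨hp, hne⟩ | ⟨i, hi1, hi2, heq, hrr⟩) <;>
    rintro (⟨hp', hne'⟩ | ⟨i', hi1', hi2', heq', hrr'⟩)
  · exact hne (hp'.eq_of_length (le_antisymm hp'.length_le hp.length_le))
  · simp only [List.get_eq_getElem] at hrr'
    rw [prefix_getElem hp hi1'] at hrr'
    exact hirr _ hrr'
  · simp only [List.get_eq_getElem] at hrr
    rw [prefix_getElem hp' hi1] at hrr
    exact hirr _ hrr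
  · simp only [List.get_eq_getElem] at hrr hrr'
    rcases Nat.lt_trichotomy i i' with h | h | h
    · rw [take_eq_getElem heq' h hi2 hi1] at hrr
      exact hirr _ hrr
    · subst h
      exact hr _ _ hrr hrr'
    · rw [take_eq_getElem heq h hi2' hi1'] at hrr'
      exact hirr _ hrr'

lemma kb_total (htri : ∀ a b : α, a ≠ b → r a b ∨ r b a) {l l' : List α} (h : l ≠ l') :
    KBLt r l l' ∨ KBLt r l' l := by
  by_cases h1 : l' <+: l
  · exact Or.inl (Or.inl ⟨h1, h⟩)
  by_cases h2 : l <+: l'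
  · exact Or.inr (Or.inl ⟨h2, fun e => h e.symm⟩)
  obtain ⟨i, hi, hi', heq, hne⟩ := exists_first_diff h1 h2
  rcases htri _ _ hne with hlt | hlt
  · exact Or.inl (Or.inr ⟨i, hi, hi', heq, by simpa using hlt⟩)
  · exact Or.inr (Or.inr ⟨i, hi', hi, heq.symm, by simpa using hlt⟩)

lemma kb_cons {a : α} (ha : ¬ r a a) {l l' : List α} :
    KBLt r (a :: l) (a :: l') ↔ KBLt r l l' := by
  constructor
  · rintro (⟨hp, hne⟩ | ⟨i, hi1, hi2, heq, hrr⟩)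
    · rw [List.cons_prefix_cons] at hp
      exact Or.inl ⟨hp.2, fun e => hne (by rw [e])⟩
    · match i, hi1, hi2 with
      | 0, _, _ => exact absurd (by simpa using hrr) ha
      | (j+1), hj1, hj2 =>
        refine Or.inr ⟨j, by simpa using hj1, by simpa using hj2, ?_, ?_⟩
        · have := heq
          simp only [List.take_succ_cons, List.cons.injEq] at this
          exact this.2
        · simpa using hrr
  · rintro (⟨hp, hne⟩ | ⟨i, hi1, hi2, heq, hrr⟩)
    · exact Or.inl ⟨List.cons_prefix_cons.mpr ⟨rfl, hp⟩, by simp [hne]⟩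
    · exact Or.inr ⟨i+1, by simpa using hi1, by simpa using hi2,
        by simp [List.take_succ_cons, heq], by simpa using hrr⟩

end KBlemmas

lemma prefix_length_lt {α : Type*} {l l' : List α} (h : l <+: l') (hne : l ≠ l') :
    l.length < l'.length := by
  rcases Nat.lt_or_ge l.length l'.length with h' | h'
  · exact h'
  · exact absurd (h.eq_of_length (le_antisymm h.length_le h')) hne

lemma ne_nil_of_proper {α : Type*} {l l' : List α} (h : l <+: l') (hne : l ≠ l') : l' ≠ [] := by
  intro e
  subst e
  exact hne (List.prefix_nil.mp h)

lemma take_ne_nil {σ : List ℕ} {i : ℕ} (hi : i < σ.length) : σ.take (i+1) ≠ [] := by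
  intro e
  rw [List.take_eq_nil_iff] at e
  rcases e with e | e
  · exact absurd e (by omega)
  · subst e; simp at hi

lemma Ffun_mem (hS : IsTree S) (hT : IsTree T) {ρ : List ℕ} (hρ : ρ ∈ T)
    (hr : rk S hSwf [] ≤ rk T hTwf ρ) {σ : List ℕ} (hσ : σ ∈ S) :
    Ffun S T hSwf hTwf ρ σ ∈ inftyTree T := by
  constructor
  · intro p hp
    rw [Ffun, List.mem_map] at hp
    obtain ⟨i, hi, rfl⟩ := hp
    rw [List.mem_range] at hi
    have hts : σ.take (i+1) ∈ S := hS.2 (List.take_prefix _ _) hσ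
    have htne : σ.take (i+1) ≠ [] := take_ne_nil hi
    rw [pairf_fst' S T hSwf hTwf ρ htne]
    have spec := gfun_spec hS hT hρ hr _ hts
    exact ⟨spec.1, ne_nil_of_proper (spec.2.2 htne).1 (spec.2.2 htne).2⟩
  · refine List.isChain_iff_getElem.mpr ?_
    intro i hi
    rw [Ffun_length] at hi
    have hi1 : i < σ.length := by omega
    have hi2 : i + 1 < σ.length := by omega
    rw [Ffun_getElem S T hSwf hTwf ρ σ i hi1, Ffun_getElem S T hSwf hTwf ρ σ (i+1) hi2]
    have h1ne : σ.take (i+1) ≠ [] := take_ne_nil hi1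
    have h2ne : σ.take (i+2) ≠ [] := take_ne_nil hi2
    rw [pairf_fst' S T hSwf hTwf ρ h1ne, pairf_fst' S T hSwf hTwf ρ h2ne]
    have hts2 : σ.take (i+2) ∈ S := hS.2 (List.take_prefix _ _) hσ
    have hpre : σ.take (i+1) <+: σ.take (i+2) := by
      rw [List.prefix_take_iff]
      exact ⟨List.take_prefix _ _, by simp only [List.length_take]; omega⟩
    have hnee : σ.take (i+1) ≠ σ.take (i+2) := by
      intro e
      have := congrArg List.length e
      simp [List.length_take] at this
      omega
    have := gfun_mono hS hT hρ hr _ hts2 _ hpre hnee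
    exact ⟨this.1, fun e => by rw [e] at this; exact lt_irrefl _ this.2⟩

lemma Ffun_kb {ρ σ τ : List ℕ} (h : KBLt (· < ·) σ τ) :
    KBLt encLt (Ffun S T hSwf hTwf ρ σ) (Ffun S T hSwf hTwf ρ τ) := by
  rcases h with ⟨hp, hne⟩ | ⟨i, h1, h2, heq, hlt⟩
  · left
    have hlen : τ.length < σ.length := prefix_length_lt hp (fun e => hne e.symm)
    have htake : σ.take τ.length = τ := (List.prefix_iff_eq_take.mp hp).symm
    constructor
    · have := Ffun_take S T hSwf hTwf ρ σ τ.length (by omega)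
      rw [htake] at this
      rw [← this]
      exact List.take_prefix _ _
    · intro e
      have := congrArg List.length e
      rw [Ffun_length, Ffun_length] at this
      omega
  · right
    simp only [List.get_eq_getElem] at hlt
    refine ⟨i, by rw [Ffun_length]; exact h1, by rw [Ffun_length]; exact h2, ?_, ?_⟩
    · rw [Ffun_take S T hSwf hTwf ρ σ i (by omega), Ffun_take S T hSwf hTwf ρ τ i (by omega), heq]
    · simp only [List.get_eq_getElem]
      rw [Ffun_getElem S T hSwf hTwf ρ σ i h1, Ffun_getElem S T hSwf hTwf ρ τ i h2]
      have e1 : σ.take (i+1) = σ.take i ++ [σ[i]'h1] := by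
        rw [← List.take_concat_get h1, List.concat_eq_append]
      have e2 : τ.take (i+1) = τ.take i ++ [τ[i]'h2] := by
        rw [← List.take_concat_get h2, List.concat_eq_append]
      show encLt _ _
      rw [e1, e2, heq]
      unfold encLt
      rw [encode_pairf, encode_pairf]
      exact (Efun_spec S T hSwf hTwf ρ (τ.take i) (τ[i]'h2)).2 _ hlt

lemma embed_of_forward_gen {β : Type*} {s : β → β → Prop} (g : β → List (List ℕ × ℕ))
    (hs : ∀ x y, s x y ↔ KBLt encLt (g x) (g y)) (f : S → β)
    (hfwd : ∀ a b : S, KBLt (· < ·) a.1 b.1 → KBLt encLt (g (f a)) (g (f b))) :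
    Nonempty ((fun a b : S => KBLt (· < ·) a.val b.val) ↪r s) := by
  have htot : ∀ a b : ℕ, a ≠ b → a < b ∨ b < a := fun a b h => Ne.lt_or_gt h
  have hasym : ∀ p q : List ℕ × ℕ, encLt p q → ¬ encLt q p :=
    fun p q h h' => absurd (h.trans h') (lt_irrefl _)
  have hirr : ∀ p : List ℕ × ℕ, ¬ encLt p p := fun p => lt_irrefl _
  have hinj : Function.Injective f := by
    intro a b e
    by_contra hne
    have hne' : a.1 ≠ b.1 := fun h => hne (Subtype.ext h)
    rcases kb_total htot hne' with h | h
    · have := hfwd a b h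
      rw [e] at this
      exact kb_irrefl hirr _ this
    · have := hfwd b a h
      rw [e] at this
      exact kb_irrefl hirr _ this
  refine ⟨⟨⟨f, hinj⟩, ?_⟩⟩
  intro a b
  simp only [Function.Embedding.coeFn_mk]
  rw [hs]
  constructor
  · intro hss
    by_contra hc
    have hne : a.1 ≠ b.1 := by
      intro e
      have : a = b := Subtype.ext e
      subst this
      exact kb_irrefl hirr _ hss
    rcases kb_total htot hne with h | h
    · exact hc h
    · exact kb_asymm hasym (hfwd b a h) hss
  · exact hfwd a b


lemma consF_mem (hS : IsTree S) (hT : IsTree T) {ρ : List ℕ} (hρ : ρ ∈ T) (hρne : ρ ≠ [])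
    (hr : rk S hSwf [] ≤ rk T hTwf ρ) {σ : List ℕ} (hσ : σ ∈ S) (c : ℕ) :
    ((ρ, c) :: Ffun S T hSwf hTwf ρ σ) ∈ inftyTree T := by
  have hm := Ffun_mem hS hT hρ hr hσ
  constructor
  · intro p hp
    rcases List.mem_cons.mp hp with e | hp'
    · subst e
      exact ⟨hρ, hρne⟩
    · exact hm.1 p hp'
  · refine List.isChain_iff_getElem.mpr ?_
    intro i hi
    simp only [List.length_cons] at hi
    match i, hi with
    | 0, hi =>
      simp only [List.get_eq_getElem, List.getElem_cons_zero, List.getElem_cons_succ]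
      have hσlen : 0 < σ.length := by
        rw [Ffun_length] at hi
        omega
      rw [Ffun_getElem S T hSwf hTwf ρ σ 0 hσlen]
      have h1ne : σ.take 1 ≠ [] := take_ne_nil hσlen
      rw [pairf_fst' S T hSwf hTwf ρ h1ne]
      have hts : σ.take 1 ∈ S := hS.2 (List.take_prefix _ _) hσ
      have := gfun_mono hS hT hρ hr _ hts [] List.nil_prefix (fun e => h1ne e.symm)
      rw [gfun_nil] at this
      exact ⟨this.1, fun e => by rw [← e] at this; exact lt_irrefl _ this.2⟩
    | (j+1), hi =>
      simp only [List.get_eq_getElem, List.getElem_cons_succ]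
      have hc := hm.2
      replace hc := List.isChain_iff_getElem.mp hc
      have := hc j (by rw [Ffun_length] at hi ⊢; omega)
      simpa using this

lemma singleton_mem (hT : IsTree T) {ρ : List ℕ} (hρ : ρ ∈ T) (hρne : ρ ≠ []) (c : ℕ) :
    [((ρ, c) : List ℕ × ℕ)] ∈ inftyTree T := by
  constructor
  · intro p hp
    simp only [List.mem_singleton] at hp
    subst hp
    exact ⟨hρ, hρne⟩
  · exact List.isChain_singleton _

/-- For nonempty well-founded trees `S, T` on ℕ: if `rank S ≤ rank T` then `KB(S)`
order-embeds into `KB(T^∞)`; if `rank S < rank T` then the order type of `KB(S)` is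
strictly below the order type of `KB(T^∞)`. -/
theorem statement6 (S T : Set (List ℕ)) (hS : IsTree S) (hT : IsTree T)
    (hSpath : ¬ HasInfPath S) (hTpath : ¬ HasInfPath T) :
    ∀ (hSwf : WellFounded (extRel S)) (hTwf : WellFounded (extRel T)),
      (treeRank S hSwf ⟨[], hS.1⟩ ≤ treeRank T hTwf ⟨[], hT.1⟩ →
        Nonempty ((fun a b : S => KBLt (· < ·) a.val b.val) ↪r
                  (fun a b : inftyTree T => KBLt encLt a.val b.val))) ∧
      (treeRank S hSwf ⟨[], hS.1⟩ < treeRank T hTwf ⟨[], hT.1⟩ →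
        ∀ (h1 : IsWellOrder S (fun a b : S => KBLt (· < ·) a.val b.val))
          (h2 : IsWellOrder (inftyTree T)
            (fun a b : inftyTree T => KBLt encLt a.val b.val)),
          @Ordinal.type _ _ h1 < @Ordinal.type _ _ h2) := by
  intro hSwf hTwf
  have hrkS : rk S hSwf [] = treeRank S hSwf ⟨[], hS.1⟩ := rk_eq_treeRank hSwf hS.1
  have hrkT : rk T hTwf [] = treeRank T hTwf ⟨[], hT.1⟩ := rk_eq_treeRank hTwf hT.1
  constructor
  · intro hle
    have hr : rk S hSwf [] ≤ rk T hTwf [] := by rw [hrkS, hrkT]; exact hle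
    exact embed_of_forward_gen (s := fun a b : inftyTree T => KBLt encLt a.val b.val)
      Subtype.val (fun x y => Iff.rfl)
      (fun a => ⟨Ffun S T hSwf hTwf [] a.1, Ffun_mem hS hT hT.1 hr a.2⟩)
      (fun a b h => Ffun_kb h)
  · intro hlt h1 h2
    have hr : rk S hSwf [] < rk T hTwf [] := by rw [hrkS, hrkT]; exact hlt
    obtain ⟨ρ, hρT, ⟨hpre, hρne'⟩, hρr⟩ := rk_step hTwf hT.1 hr
    have hρne : ρ ≠ [] := fun e => hρne' e.symm
    obtain ⟨c', hc'⟩ := exists_gt_encode ρ (Encodable.encode ((ρ, 0) : List ℕ × ℕ))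
    haveI := h1
    haveI := h2
    set sRel := (fun a b : inftyTree T => KBLt encLt a.val b.val) with hsRel
    set bb : inftyTree T := ⟨[(ρ, c')], singleton_mem hT hρT hρne c'⟩ with hbb
    have hboundmem : ∀ a : S, ((ρ, 0) :: Ffun S T hSwf hTwf ρ a.1) ∈ inftyTree T :=
      fun a => consF_mem hS hT hρT hρne hρr a.2 0
    have hbound : ∀ a : S, sRel ⟨_, hboundmem a⟩ bb := by
      intro a
      show KBLt encLt ((ρ, 0) :: Ffun S T hSwf hTwf ρ a.1) [(ρ, c')]
      right
      refine ⟨0, by simp, by simp, by simp, ?_⟩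
      simpa [encLt] using hc'
    have hemb : Nonempty ((fun a b : S => KBLt (· < ·) a.val b.val) ↪r
        Subrel sRel (sRel · bb)) := by
      refine embed_of_forward_gen (fun x => x.1.1) (fun x y => Iff.rfl)
        (fun a => ⟨⟨_, hboundmem a⟩, hbound a⟩) ?_
      intro a b h
      show KBLt encLt ((ρ, 0) :: Ffun S T hSwf hTwf ρ a.1)
        ((ρ, 0) :: Ffun S T hSwf hTwf ρ b.1)
      exact (kb_cons (show ¬ encLt (ρ, 0) (ρ, 0) from lt_irrefl _)).mpr (Ffun_kb h)
    obtain ⟨e⟩ := hemb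
    have hle1 : @Ordinal.type _ _ h1 ≤ Ordinal.type (Subrel sRel (sRel · bb)) :=
      RelEmbedding.ordinal_type_le e
    have hle2 : Ordinal.type (Subrel sRel (sRel · bb)) = Ordinal.typein sRel bb :=
      Ordinal.type_subrel sRel bb
    exact lt_of_le_of_lt (hle1.trans_eq hle2) (Ordinal.typein_lt_type sRel bb)
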